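/- Let C be a coupling structure for a Markov chain M and λ ∈ (0,1]. The discrepancy γ_λ^C, defined as the least fixed point of Γ_λ^C(d)(m,n) = 1 if ℓ(m) ≠ ℓ(n) and λ·∑_{u,v} d(u,v)·C(m,n)(u,v) otherwise, satisfies d_λ ⊑ γ_λ^C, i.e., the bisimilarity distance is bounded above by the discrepancy of any coupling structure. -/
import Mathlib


open Finset

def IsDist {X : Type*} [Fintype X] (μ : X → ℝ) : Prop :=
  (∀ x, 0 ≤ μ x) ∧ ∑ x, μ x = 1

def IsCoupling {X : Type*} [Fintype X] (μ ν : X → ℝ) (ω : X × X → ℝ) : Prop :=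
  IsDist ω ∧ (∀ x, ∑ y, ω (x, y) = μ x) ∧ (∀ y, ∑ x, ω (x, y) = ν y)

noncomputable def kant {X : Type*} [Fintype X] (d : X → X → ℝ) (μ ν : X → ℝ) : ℝ :=
  sInf { c | ∃ ω : X × X → ℝ, IsCoupling μ ν ω ∧ c = ∑ p : X × X, d p.1 p.2 * ω p }

open Classical in
noncomputable def psi {S L : Type*} [Fintype S] (lam : ℝ) (T : S → S → ℝ) (lab : S → L)
    (d : S → S → ℝ) : S → S → ℝ :=
  fun s t => if lab s = lab t then lam * kant d (T s) (T t) else 1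

noncomputable def bdist {S L : Type*} [Fintype S] (lam : ℝ) (T : S → S → ℝ) (lab : S → L) :
    S → S → ℝ := fun s t =>
  sInf { r | ∃ d : S → S → ℝ, (∀ a b, 0 ≤ d a b ∧ d a b ≤ 1) ∧
      (∀ a b, psi lam T lab d a b ≤ d a b) ∧ r = d s t }

def sumT {M N : Type*} (τ : M → M → ℝ) (θ : N → N → ℝ) : M ⊕ N → M ⊕ N → ℝ
  | Sum.inl m, Sum.inl m' => τ m m'
  | Sum.inr n, Sum.inr n' => θ n n'
  | _, _ => 0

def sumL {M N L : Type*} (ℓ : M → L) (α : N → L) : M ⊕ N → L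
  | Sum.inl m => ℓ m
  | Sum.inr n => α n

open Classical in
noncomputable def gammaOp {M L : Type*} [Fintype M] (lam : ℝ) (lab : M → L)
    (C : M → M → (M × M → ℝ)) (d : M → M → ℝ) : M → M → ℝ :=
  fun m n => if lab m = lab n then lam * ∑ p : M × M, d p.1 p.2 * C m n p else 1

section Aux
variable {X : Type*} [Fintype X]

def kantSet (d : X → X → ℝ) (μ ν : X → ℝ) : Set ℝ :=
  { c | ∃ ω : X × X → ℝ, IsCoupling μ ν ω ∧ c = ∑ p : X × X, d p.1 p.2 * ω p }

lemma prod_coupling {μ ν : X → ℝ} (hμ : IsDist μ) (hν : IsDist ν) :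
    IsCoupling μ ν (fun p => μ p.1 * ν p.2) := by
  refine ⟨⟨fun p => mul_nonneg (hμ.1 _) (hν.1 _), ?_⟩, fun x => ?_, fun y => ?_⟩
  · rw [Fintype.sum_prod_type]
    simp [← Finset.sum_mul, hμ.2, hν.2, ← Finset.mul_sum]
  · simp [← Finset.mul_sum, hν.2]
  · simp [← Finset.sum_mul, hμ.2]

lemma kantSet_nonempty {μ ν : X → ℝ} (hμ : IsDist μ) (hν : IsDist ν) (d : X → X → ℝ) :
    (kantSet d μ ν).Nonempty :=
  ⟨_, _, prod_coupling hμ hν, rfl⟩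

lemma kantSet_bdd {d : X → X → ℝ} (hd : ∀ a b, 0 ≤ d a b) (μ ν : X → ℝ) :
    BddBelow (kantSet d μ ν) := by
  refine ⟨0, fun c hc => ?_⟩
  obtain ⟨ω, hω, rfl⟩ := hc
  exact Finset.sum_nonneg fun p _ => mul_nonneg (hd _ _) (hω.1.1 p)

lemma kant_le_sum {d : X → X → ℝ} (hd : ∀ a b, 0 ≤ d a b) {μ ν : X → ℝ}
    {ω : X × X → ℝ} (hω : IsCoupling μ ν ω) :
    kant d μ ν ≤ ∑ p : X × X, d p.1 p.2 * ω p :=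
  csInf_le (kantSet_bdd hd μ ν) ⟨ω, hω, rfl⟩

lemma kant_nonneg {d : X → X → ℝ} (hd : ∀ a b, 0 ≤ d a b) {μ ν : X → ℝ}
    (hμ : IsDist μ) (hν : IsDist ν) : 0 ≤ kant d μ ν := by
  refine le_csInf (kantSet_nonempty hμ hν d) fun c hc => ?_
  obtain ⟨ω, hω, rfl⟩ := hc
  exact Finset.sum_nonneg fun p _ => mul_nonneg (hd _ _) (hω.1.1 p)

lemma kant_le_one {d : X → X → ℝ} (hd0 : ∀ a b, 0 ≤ d a b) (hd1 : ∀ a b, d a b ≤ 1)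
    {μ ν : X → ℝ} (hμ : IsDist μ) (hν : IsDist ν) : kant d μ ν ≤ 1 := by
  have h := kant_le_sum hd0 (prod_coupling hμ hν)
  refine h.trans ?_
  calc ∑ p : X × X, d p.1 p.2 * (μ p.1 * ν p.2)
      ≤ ∑ p : X × X, 1 * (μ p.1 * ν p.2) := by
        refine Finset.sum_le_sum fun p _ => ?_
        exact mul_le_mul_of_nonneg_right (hd1 _ _) (mul_nonneg (hμ.1 _) (hν.1 _))
    _ = 1 := by
        simp only [one_mul]
        rw [Fintype.sum_prod_type]
        simp [← Finset.mul_sum, hν.2, hμ.2]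

lemma kant_mono {d d' : X → X → ℝ} (hd0 : ∀ a b, 0 ≤ d a b)
    (hle : ∀ a b, d a b ≤ d' a b) {μ ν : X → ℝ} (hμ : IsDist μ) (hν : IsDist ν) :
    kant d μ ν ≤ kant d' μ ν := by
  refine le_csInf (kantSet_nonempty hμ hν d') fun c hc => ?_
  obtain ⟨ω, hω, rfl⟩ := hc
  refine (kant_le_sum hd0 hω).trans ?_
  exact Finset.sum_le_sum fun p _ => mul_le_mul_of_nonneg_right (hle _ _) (hω.1.1 p)

end Aux

theorem stmt7 {M L : Type*} [Fintype M] [Nonempty M]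
    (lam : ℝ) (hlam : 0 < lam ∧ lam ≤ 1)
    (τ : M → M → ℝ) (hτ : ∀ m, IsDist (τ m)) (ℓ : M → L)
    (C : M → M → (M × M → ℝ)) (hC : ∀ m n, IsCoupling (τ m) (τ n) (C m n))
    (d : M → M → ℝ)
    (hdb : ∀ a b, 0 ≤ d a b ∧ d a b ≤ 1)
    (hdfix : psi lam τ ℓ d = d)
    (hdleast : ∀ d' : M → M → ℝ, (∀ a b, 0 ≤ d' a b ∧ d' a b ≤ 1) →
        psi lam τ ℓ d' = d' → ∀ a b, d a b ≤ d' a b)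
    (g : M → M → ℝ)
    (hgb : ∀ a b, 0 ≤ g a b ∧ g a b ≤ 1)
    (hgfix : gammaOp lam ℓ C g = g)
    (hgleast : ∀ g' : M → M → ℝ, (∀ a b, 0 ≤ g' a b ∧ g' a b ≤ 1) →
        gammaOp lam ℓ C g' = g' → ∀ a b, g a b ≤ g' a b) :
    ∀ m n, d m n ≤ g m n := by
  classical
  -- set of prefixed points of psi within [0,1]
  set S : Set (M → M → ℝ) :=
    {h | (∀ a b, 0 ≤ h a b ∧ h a b ≤ 1) ∧ ∀ a b, psi lam τ ℓ h a b ≤ h a b} with hS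
  have hgS : g ∈ S := by
    refine ⟨hgb, fun a b => ?_⟩
    conv_rhs => rw [← hgfix]
    unfold psi gammaOp
    by_cases hab : ℓ a = ℓ b
    · simp only [hab, if_true]
      exact mul_le_mul_of_nonneg_left
        (kant_le_sum (fun x y => (hgb x y).1) (hC a b)) hlam.1.le
    · simp [hab]
  -- pointwise infimum
  set hstar : M → M → ℝ := fun a b => sInf ((fun h : M → M → ℝ => h a b) '' S) with hhstar
  have hbdd : ∀ a b, BddBelow ((fun h : M → M → ℝ => h a b) '' S) := by
    intro a b
    refine ⟨0, fun r hr => ?_⟩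
    obtain ⟨h, hh, rfl⟩ := hr
    exact (hh.1 a b).1
  have hne : ∀ a b, ((fun h : M → M → ℝ => h a b) '' S).Nonempty :=
    fun a b => ⟨g a b, g, hgS, rfl⟩
  have hstar_le : ∀ h ∈ S, ∀ a b, hstar a b ≤ h a b :=
    fun h hh a b => csInf_le (hbdd a b) ⟨h, hh, rfl⟩
  have hstar0 : ∀ a b, 0 ≤ hstar a b := by
    intro a b
    refine le_csInf (hne a b) fun r hr => ?_
    obtain ⟨h, hh, rfl⟩ := hr
    exact (hh.1 a b).1
  have hstar1 : ∀ a b, hstar a b ≤ 1 :=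
    fun a b => (hstar_le g hgS a b).trans (hgb a b).2
  -- monotonicity of psi
  have psi_mono : ∀ h h' : M → M → ℝ, (∀ a b, 0 ≤ h a b) → (∀ a b, h a b ≤ h' a b) →
      ∀ a b, psi lam τ ℓ h a b ≤ psi lam τ ℓ h' a b := by
    intro h h' h0 hle a b
    unfold psi
    by_cases hab : ℓ a = ℓ b
    · simp only [hab, if_true]
      exact mul_le_mul_of_nonneg_left (kant_mono h0 hle (hτ a) (hτ b)) hlam.1.le
    · simp [hab]
  -- psi hstar ≤ hstar
  have hpre : ∀ a b, psi lam τ ℓ hstar a b ≤ hstar a b := by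
    intro a b
    refine le_csInf (hne a b) fun r hr => ?_
    obtain ⟨h, hh, rfl⟩ := hr
    exact (psi_mono hstar h hstar0 (hstar_le h hh) a b).trans (hh.2 a b)
  -- psi hstar is in S
  have hpsiS : psi lam τ ℓ hstar ∈ S := by
    refine ⟨fun a b => ⟨?_, ?_⟩, fun a b => psi_mono _ _ ?_ hpre a b⟩
    · unfold psi
      by_cases hab : ℓ a = ℓ b
      · simp only [hab, if_true]
        exact mul_nonneg hlam.1.le (kant_nonneg hstar0 (hτ a) (hτ b))
      · simp [hab]
    · unfold psi
      by_cases hab : ℓ a = ℓ b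
      · simp only [hab, if_true]
        calc lam * kant hstar (τ a) (τ b) ≤ 1 * 1 :=
              mul_le_mul hlam.2 (kant_le_one hstar0 hstar1 (hτ a) (hτ b))
                (kant_nonneg hstar0 (hτ a) (hτ b)) zero_le_one
          _ = 1 := one_mul 1
      · simp [hab]
    · intro a b
      unfold psi
      by_cases hab : ℓ a = ℓ b
      · simp only [hab, if_true]
        exact mul_nonneg hlam.1.le (kant_nonneg hstar0 (hτ a) (hτ b))
      · simp [hab]
  -- hstar is a fixed point
  have hfix : psi lam τ ℓ hstar = hstar := by
    funext a b
    exact le_antisymm (hpre a b) (hstar_le _ hpsiS a b)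
  intro m n
  exact (hdleast hstar (fun a b => ⟨hstar0 a b, hstar1 a b⟩) hfix m n).trans
    (hstar_le g hgS m n)
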